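/- For any odd prime ℓ and integers a₁, a₂ with 0 ≤ a₁, a₂ < ℓ such that the Legendre symbol ((-16a₁ + 8a₂ + 1)/ℓ) = -1, for every non-negative integer n, the number of partitions of ℓn + a₂ having exactly a₁ hook lengths divisible by 2 (counted modulo ℓ, i.e., whose number of 2-hooks is ≡ a₁ (mod ℓ)) is zero. -/

import Mathlib

/-- The hook length of the cell in row `i`, column `j` of a Young diagram. -/
def YoungDiagram.hookLength (μ : YoungDiagram) (i j : ℕ) : ℕ :=
  (μ.rowLen i - j) + (μ.colLen j - i) - 1

/-- The number of cells of `μ` whose hook length is divisible by `t`. -/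
def hookCount (t : ℕ) (μ : YoungDiagram) : ℕ :=
  (μ.cells.filter (fun c => t ∣ μ.hookLength c.1 c.2)).card

/-- The Young diagram attached to a partition of `n`. -/
def Nat.Partition.toYoung {n : ℕ} (p : n.Partition) : YoungDiagram :=
  YoungDiagram.ofRowLens (p.parts.sort (· ≥ ·)) (List.Pairwise.sortedGE (p.parts.pairwise_sort _))

/-- `p_t(a,b;n)`: the number of partitions `λ ⊢ n` with `#𝓗_t(λ) ≡ a (mod b)`. -/
def hookP (t a b n : ℕ) : ℕ :=
  Fintype.card {p : n.Partition // hookCount t p.toYoung % b = a % b}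

namespace TwoHookAux

open Finset

/-- number of rows -/
def Nr (μ : YoungDiagram) : ℕ := μ.colLen 0

/-- first-column "beta numbers" (extended by `0` past the last row) -/
def fb (μ : YoungDiagram) (i : ℕ) : ℕ := μ.rowLen i + (Nr μ - 1 - i)

/-- the complementary sequence -/
def gb (μ : YoungDiagram) (j : ℕ) : ℕ := Nr μ + j - μ.colLen j

lemma colLen_le (μ : YoungDiagram) (j : ℕ) : μ.colLen j ≤ Nr μ :=
  μ.colLen_anti 0 j (Nat.zero_le j)

lemma rowLen_pos_iff (μ : YoungDiagram) (i : ℕ) : 0 < μ.rowLen i ↔ i < Nr μ := by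
  rw [← YoungDiagram.mem_iff_lt_rowLen, YoungDiagram.mem_iff_lt_colLen]; rfl

lemma mem_iff (μ : YoungDiagram) (i j : ℕ) : (i, j) ∈ μ ↔ gb μ j < fb μ i := by
  have hc := colLen_le μ j
  by_cases hi : i < Nr μ
  · constructor
    · intro h
      have h1 := YoungDiagram.mem_iff_lt_rowLen.mp h
      have h2 := YoungDiagram.mem_iff_lt_colLen.mp h
      unfold fb gb; omega
    · intro h
      by_contra hm
      have h1 : μ.rowLen i ≤ j := by
        by_contra h1
        exact hm (YoungDiagram.mem_iff_lt_rowLen.mpr (by omega))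
      have h2 : μ.colLen j ≤ i := by
        by_contra h2
        exact hm (YoungDiagram.mem_iff_lt_colLen.mpr (by omega))
      unfold fb gb at h; omega
  · have h0 : μ.rowLen i = 0 := by
      by_contra h
      have := (rowLen_pos_iff μ i).mp (Nat.pos_of_ne_zero h)
      omega
    constructor
    · intro h
      have := YoungDiagram.mem_iff_lt_colLen.mp h
      omega
    · intro h
      unfold fb gb at h
      omega

lemma fb_lt (μ : YoungDiagram) {a b : ℕ} (hab : a < b) (hb : b < Nr μ) :
    fb μ b < fb μ a := by
  have := μ.rowLen_anti a b (le_of_lt hab)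
  unfold fb; omega

lemma fb_inj (μ : YoungDiagram) {a b : ℕ} (ha : a < Nr μ) (hb : b < Nr μ)
    (h : fb μ a = fb μ b) : a = b := by
  rcases lt_trichotomy a b with hlt | he | hgt
  · exact absurd h (Nat.ne_of_gt (fb_lt μ hlt hb))
  · exact he
  · exact absurd h (Nat.ne_of_lt (fb_lt μ hgt ha))

lemma gb_mono (μ : YoungDiagram) : StrictMono (gb μ) := by
  apply strictMono_nat_of_lt_succ
  intro j
  have h1 : μ.colLen (j+1) ≤ μ.colLen j := μ.colLen_anti j (j+1) (by omega)
  have h2 := colLen_le μ j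
  unfold gb; omega

lemma fb_ne_gb (μ : YoungDiagram) {i j : ℕ} (hi : i < Nr μ) : fb μ i ≠ gb μ j := by
  intro h
  have hm : (i, j) ∉ μ := by rw [mem_iff]; omega
  have h1 : μ.rowLen i ≤ j := by
    by_contra h1
    exact hm (YoungDiagram.mem_iff_lt_rowLen.mpr (by omega))
  have h2 : μ.colLen j ≤ i := by
    by_contra h2
    exact hm (YoungDiagram.mem_iff_lt_colLen.mpr (by omega))
  have hc := colLen_le μ j
  unfold fb gb at h; omega

lemma fb_big (μ : YoungDiagram) {i : ℕ} (hi : Nr μ ≤ i) : fb μ i = 0 := by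
  have h0 : μ.rowLen i = 0 := by
    by_contra h
    have := (rowLen_pos_iff μ i).mp (Nat.pos_of_ne_zero h)
    omega
  unfold fb; omega

lemma exists_gb (μ : YoungDiagram) {m : ℕ} (hm : ∀ i < Nr μ, fb μ i ≠ m) :
    ∃ j, gb μ j = m := by
  set N := Nr μ with hN
  have hfN : fb μ N ≤ m := by rw [fb_big μ (le_refl N)]; omega
  have hex : ∃ k, fb μ k ≤ m := ⟨N, hfN⟩
  set k := Nat.find hex with hk
  have hk1 : fb μ k ≤ m := Nat.find_spec hex
  have hk2 : ∀ i < k, m < fb μ i := fun i hi => lt_of_not_ge (Nat.find_min hex hi)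
  have hkN : k ≤ N := Nat.find_le hfN
  by_cases hkn : k < N
  · have hflt : fb μ k < m := lt_of_le_of_ne hk1 (hm k hkn)
    have hfk : μ.rowLen k + (N - 1 - k) = fb μ k := rfl
    set j := m + k - N with hj
    have hnotmem : (k, j) ∉ μ := by
      rw [YoungDiagram.mem_iff_lt_rowLen]; omega
    have hcle : μ.colLen j ≤ k := by
      by_contra h
      exact hnotmem (YoungDiagram.mem_iff_lt_colLen.mpr (by omega))
    have hcge : k ≤ μ.colLen j := by
      rcases Nat.eq_zero_or_pos k with h0 | hk0
      · omega
      · have hmlt := hk2 (k-1) (by omega)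
        have hfk1 : μ.rowLen (k-1) + (N - 1 - (k-1)) = fb μ (k-1) := rfl
        have hmem : (k-1, j) ∈ μ := by
          rw [YoungDiagram.mem_iff_lt_rowLen]; omega
        have := YoungDiagram.mem_iff_lt_colLen.mp hmem
        omega
    exact ⟨j, by unfold gb; omega⟩
  · have hkeq : k = N := by omega
    rcases Nat.eq_zero_or_pos N with h0 | hNpos
    · refine ⟨m, ?_⟩
      have := colLen_le μ m
      unfold gb; omega
    · have hmlt := hk2 (N-1) (by omega)
      have hfN1 : μ.rowLen (N-1) + (N - 1 - (N-1)) = fb μ (N-1) := rfl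
      have hmem : (N-1, m) ∈ μ := by
        rw [YoungDiagram.mem_iff_lt_rowLen]; omega
      have h1 := YoungDiagram.mem_iff_lt_colLen.mp hmem
      have h2 := colLen_le μ m
      refine ⟨m, ?_⟩
      unfold gb; omega

lemma hook_eq (μ : YoungDiagram) {i j : ℕ} (h : (i, j) ∈ μ) :
    μ.hookLength i j = fb μ i - gb μ j := by
  have hr := YoungDiagram.mem_iff_lt_rowLen.mp h
  have hc := YoungDiagram.mem_iff_lt_colLen.mp h
  have hcN := colLen_le μ j
  unfold YoungDiagram.hookLength fb gb Nr
  unfold Nr at hcN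
  omega

lemma dvd_iff (μ : YoungDiagram) {i j : ℕ} (h : (i, j) ∈ μ) :
    2 ∣ μ.hookLength i j ↔ fb μ i % 2 = gb μ j % 2 := by
  have h1 := hook_eq μ h
  have h2 := (mem_iff μ i j).mp h
  rw [h1]; omega

lemma fst_lt (μ : YoungDiagram) {c : ℕ × ℕ} (hc : c ∈ μ.cells) : c.1 < Nr μ := by
  obtain ⟨a, b⟩ := c
  have hm : (a, b) ∈ μ := hc
  have h1 := YoungDiagram.mem_iff_lt_colLen.mp hm
  have h2 := colLen_le μ b
  omega

/-- generic fiber cardinality computation -/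
lemma fiber_card {s : Finset (ℕ × ℕ)} {i : ℕ} {t : Finset ℕ}
    (h : ∀ j, (i, j) ∈ s ↔ j ∈ t) :
    (s.filter (fun c => c.1 = i)).card = t.card := by
  refine Finset.card_bij' (fun c _ => c.2) (fun j _ => (i, j)) ?_ ?_ ?_ ?_
  · rintro ⟨a, b⟩ hc
    rw [Finset.mem_filter] at hc
    obtain ⟨h1, h2⟩ := hc
    simp only at h2
    subst h2
    exact (h b).mp h1
  · intro j hj
    rw [Finset.mem_filter]
    exact ⟨(h j).mpr hj, rfl⟩
  · rintro ⟨a, b⟩ hc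
    rw [Finset.mem_filter] at hc
    have h2 : a = i := hc.2
    simp [h2]
  · intro j _
    rfl

lemma card_half (F : ℕ) : ((range F).filter (fun m => m % 2 = F % 2)).card = F / 2 := by
  have himg : (range F).filter (fun m => m % 2 = F % 2)
      = (range (F / 2)).image (fun t => 2 * t + F % 2) := by
    ext m
    simp only [mem_filter, mem_range, mem_image]
    constructor
    · rintro ⟨h1, h2⟩
      exact ⟨m / 2, by omega, by omega⟩
    · rintro ⟨t, ht, rfl⟩
      omega
  rw [himg, Finset.card_image_of_injective _ (fun a b h => by omega), card_range]

/-- The per-row count of even hooks. -/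
lemma row_count (μ : YoungDiagram) (i : ℕ) (hi : i < Nr μ) :
    ((range (μ.rowLen i)).filter (fun j => fb μ i % 2 = gb μ j % 2)).card
      + ((range (Nr μ)).filter
          (fun i' => fb μ i' < fb μ i ∧ fb μ i' % 2 = fb μ i % 2)).card
    = fb μ i / 2 := by
  classical
  set B := (range (fb μ i)).filter (fun m => m % 2 = fb μ i % 2) with hB
  have hsplit := Finset.card_filter_add_card_filter_not
    (s := B) (p := fun m => ∃ i' < Nr μ, fb μ i' = m)
  have hA : ((range (μ.rowLen i)).filter (fun j => fb μ i % 2 = gb μ j % 2)).card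
      = (B.filter (fun m => ¬ ∃ i' < Nr μ, fb μ i' = m)).card := by
    apply Finset.card_bij (fun j _ => gb μ j)
    · intro j hj
      simp only [mem_filter, mem_range, hB] at hj ⊢
      have hmem : (i, j) ∈ μ := YoungDiagram.mem_iff_lt_rowLen.mpr hj.1
      have hlt := (mem_iff μ i j).mp hmem
      refine ⟨⟨hlt, hj.2.symm⟩, ?_⟩
      rintro ⟨i', hi', he⟩
      exact fb_ne_gb μ hi' he
    · intro a ha b hb h
      exact (gb_mono μ).injective h
    · intro m hm
      simp only [mem_filter, mem_range, hB] at hm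
      obtain ⟨⟨hmF, hpar⟩, hne⟩ := hm
      have hne' : ∀ i' < Nr μ, fb μ i' ≠ m := by
        intro i' hi' he
        exact hne ⟨i', hi', he⟩
      obtain ⟨j, hj⟩ := exists_gb μ hne'
      refine ⟨j, ?_, hj⟩
      simp only [mem_filter, mem_range]
      have hmem : (i, j) ∈ μ := (mem_iff μ i j).mpr (by omega)
      exact ⟨YoungDiagram.mem_iff_lt_rowLen.mp hmem, by omega⟩
  have hC : ((range (Nr μ)).filter
        (fun i' => fb μ i' < fb μ i ∧ fb μ i' % 2 = fb μ i % 2)).card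
      = (B.filter (fun m => ∃ i' < Nr μ, fb μ i' = m)).card := by
    apply Finset.card_bij (fun i' _ => fb μ i')
    · intro i' hi'
      simp only [mem_filter, mem_range, hB] at hi' ⊢
      exact ⟨⟨hi'.2.1, hi'.2.2⟩, ⟨i', hi'.1, rfl⟩⟩
    · intro a ha b hb h
      simp only [mem_filter, mem_range] at ha hb
      exact fb_inj μ ha.1 hb.1 h
    · intro m hm
      simp only [mem_filter, mem_range, hB] at hm
      obtain ⟨⟨hmF, hpar⟩, i', hi', he⟩ := hm
      refine ⟨i', ?_, he⟩
      simp only [mem_filter, mem_range]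
      exact ⟨hi', by omega, by omega⟩
  have hBcard : B.card = fb μ i / 2 := card_half (fb μ i)
  omega

/-- `μ.cells.card = ∑ rowLen`. -/
lemma card_eq_sum (μ : YoungDiagram) :
    μ.cells.card = ∑ i ∈ range (Nr μ), μ.rowLen i := by
  rw [Finset.card_eq_sum_card_fiberwise (f := Prod.fst) (t := range (Nr μ))
    (fun c hc => Finset.mem_range.mpr (fst_lt μ hc))]
  apply Finset.sum_congr rfl
  intro i _
  rw [← Finset.card_range (μ.rowLen i)]
  apply fiber_card
  intro j
  constructor
  · intro hj
    have hm : (i, j) ∈ μ := hj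
    exact Finset.mem_range.mpr (YoungDiagram.mem_iff_lt_rowLen.mp hm)
  · intro hj
    have hm : (i, j) ∈ μ := YoungDiagram.mem_iff_lt_rowLen.mpr (Finset.mem_range.mp hj)
    exact hm

/-- The key structural result: `8·|μ| + 1 − 16·(#even hooks)` is an odd square. -/
lemma key (μ : YoungDiagram) :
    ∃ d : ℤ, 8 * (μ.cells.card : ℤ) + 1 = 16 * (hookCount 2 μ : ℤ) + (2 * d - 1) ^ 2 := by
  classical
  set N := Nr μ with hNdef
  set se := ((range N).filter (fun i => fb μ i % 2 = 0)).card with hse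
  set so := ((range N).filter (fun i => fb μ i % 2 = 1)).card with hso
  -- se + so = N
  have h6 : se + so = N := by
    have := Finset.card_filter_add_card_filter_not
      (s := range N) (p := fun i => fb μ i % 2 = 0)
    have heq : (range N).filter (fun i => ¬ fb μ i % 2 = 0)
        = (range N).filter (fun i => fb μ i % 2 = 1) := by
      apply Finset.filter_congr
      intro x _
      constructor
      · intro h; omega
      · intro h; omega
    rw [heq] at this
    rw [hse, hso, this, card_range]
  -- hookCount as a sum over rows
  have hE : hookCount 2 μ = ∑ i ∈ range N,
      ((range (μ.rowLen i)).filter (fun j => fb μ i % 2 = gb μ j % 2)).card := by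
    rw [hookCount, Finset.card_eq_sum_card_fiberwise (f := Prod.fst) (t := range N)
      (fun c hc => Finset.mem_range.mpr (fst_lt μ (Finset.mem_filter.mp hc).1))]
    apply Finset.sum_congr rfl
    intro i _
    apply fiber_card
    intro j
    rw [Finset.mem_filter, Finset.mem_filter, Finset.mem_range]
    constructor
    · rintro ⟨h1, h2⟩
      have hm : (i, j) ∈ μ := h1
      exact ⟨YoungDiagram.mem_iff_lt_rowLen.mp hm, (dvd_iff μ hm).mp h2⟩
    · rintro ⟨h1, h2⟩
      have hm : (i, j) ∈ μ := YoungDiagram.mem_iff_lt_rowLen.mpr h1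
      exact ⟨hm, (dvd_iff μ hm).mpr h2⟩
  -- T
  set T := ∑ i ∈ range N, ((range N).filter
      (fun i' => fb μ i' < fb μ i ∧ fb μ i' % 2 = fb μ i % 2)).card with hT
  -- identity 3 : E + T = H
  set H := ∑ i ∈ range N, fb μ i / 2 with hH
  have h3 : hookCount 2 μ + T = H := by
    rw [hE, hT, hH, ← Finset.sum_add_distrib]
    apply Finset.sum_congr rfl
    intro i hi
    exact row_count μ i (Finset.mem_range.mp hi)
  -- identity 4 : 2T + N = se² + so²
  have h4 : 2 * T + N = se ^ 2 + so ^ 2 := by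
    -- card of the same-parity pair set
    set Q := (range N ×ˢ range N).filter
        (fun p => fb μ p.1 % 2 = fb μ p.2 % 2) with hQ
    have hQcard : Q.card = se ^ 2 + so ^ 2 := by
      have hsplitQ := Finset.card_filter_add_card_filter_not
        (s := Q) (p := fun p => fb μ p.1 % 2 = 0)
      have he1 : Q.filter (fun p => fb μ p.1 % 2 = 0)
          = ((range N).filter (fun i => fb μ i % 2 = 0)) ×ˢ
            ((range N).filter (fun i => fb μ i % 2 = 0)) := by
        ext p
        simp only [hQ, Finset.mem_filter, Finset.mem_product]
        constructor
        · rintro ⟨⟨⟨ha, hb⟩, hpar⟩, h0⟩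
          exact ⟨⟨ha, h0⟩, hb, by omega⟩
        · rintro ⟨⟨ha, h0⟩, hb, h1⟩
          exact ⟨⟨⟨ha, hb⟩, by omega⟩, h0⟩
      have he2 : Q.filter (fun p => ¬ fb μ p.1 % 2 = 0)
          = ((range N).filter (fun i => fb μ i % 2 = 1)) ×ˢ
            ((range N).filter (fun i => fb μ i % 2 = 1)) := by
        ext p
        simp only [hQ, Finset.mem_filter, Finset.mem_product]
        constructor
        · rintro ⟨⟨⟨ha, hb⟩, hpar⟩, h0⟩
          exact ⟨⟨ha, by omega⟩, hb, by omega⟩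
        · rintro ⟨⟨ha, h0⟩, hb, h1⟩
          exact ⟨⟨⟨ha, hb⟩, by omega⟩, by omega⟩
      rw [he1, he2, Finset.card_product, Finset.card_product] at hsplitQ
      rw [← hsplitQ, ← hse, ← hso]
      ring
    -- Q splits as P ⊔ P' ⊔ D
    set P := Q.filter (fun p => fb μ p.2 < fb μ p.1) with hP
    have hQsplit : Q.card = P.card + (Q.filter (fun p => ¬ fb μ p.2 < fb μ p.1)).card :=
      (Finset.card_filter_add_card_filter_not
        (s := Q) (p := fun p => fb μ p.2 < fb μ p.1)).symm
    set R := Q.filter (fun p => ¬ fb μ p.2 < fb μ p.1) with hR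
    have hRsplit : R.card = (R.filter (fun p => fb μ p.1 < fb μ p.2)).card
        + (R.filter (fun p => ¬ fb μ p.1 < fb μ p.2)).card :=
      (Finset.card_filter_add_card_filter_not
        (s := R) (p := fun p => fb μ p.1 < fb μ p.2)).symm
    -- swap bijection : R.filter (<) ≃ P
    have hswap : (R.filter (fun p => fb μ p.1 < fb μ p.2)).card = P.card := by
      apply Finset.card_bij (fun p _ => p.swap)
      · rintro ⟨a, b⟩ hp
        simp only [hR, hQ, hP, Finset.mem_filter, Finset.mem_product, Prod.swap] at hp ⊢
        obtain ⟨⟨⟨⟨ha, hb⟩, hpar⟩, h1⟩, h2⟩ := hp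
        exact ⟨⟨⟨hb, ha⟩, hpar.symm⟩, h2⟩
      · rintro ⟨a, b⟩ _ ⟨c, e⟩ _ h
        simpa [Prod.ext_iff, and_comm] using (Prod.ext_iff.mp h)
      · rintro ⟨a, b⟩ hp
        simp only [hR, hQ, hP, Finset.mem_filter, Finset.mem_product] at hp
        obtain ⟨⟨⟨ha, hb⟩, hpar⟩, h1⟩ := hp
        refine ⟨(b, a), ?_, rfl⟩
        simp only [hR, hQ, Finset.mem_filter, Finset.mem_product]
        exact ⟨⟨⟨⟨hb, ha⟩, hpar.symm⟩, by omega⟩, h1⟩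
      -- diag
    have hdiag : (R.filter (fun p => ¬ fb μ p.1 < fb μ p.2)).card = N := by
      have heq : R.filter (fun p => ¬ fb μ p.1 < fb μ p.2)
          = (range N).image (fun i => (i, i)) := by
        ext ⟨a, b⟩
        simp only [hR, hQ, Finset.mem_filter, Finset.mem_product, Finset.mem_image,
          Finset.mem_range, Prod.ext_iff]
        constructor
        · rintro ⟨⟨⟨⟨ha, hb⟩, hpar⟩, h1⟩, h2⟩
          have : fb μ a = fb μ b := by omega
          have hab : a = b := fb_inj μ ha hb this
          exact ⟨a, ha, rfl, hab⟩
        · rintro ⟨i, hi, rfl, rfl⟩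
          exact ⟨⟨⟨⟨hi, hi⟩, rfl⟩, by omega⟩, by omega⟩
      rw [heq, Finset.card_image_of_injective _ (fun a b h => (Prod.ext_iff.mp h).1),
        card_range]
    -- T = P.card
    have hTP : T = P.card := by
      rw [hT, Finset.card_eq_sum_card_fiberwise (f := Prod.fst) (t := range N)
        (fun c hc => by
          have hc : c ∈ P := hc
          simp only [hP, hQ, Finset.mem_filter, Finset.mem_product] at hc
          exact hc.1.1.1)]
      apply Finset.sum_congr rfl
      intro i hi
      rw [Finset.mem_range] at hi
      symm
      apply fiber_card
      intro j
      simp only [hP, hQ, Finset.mem_filter, Finset.mem_product, Finset.mem_range]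
      constructor
      · rintro ⟨⟨⟨ha, hb⟩, hpar⟩, h1⟩
        exact ⟨hb, h1, hpar.symm⟩
      · rintro ⟨hb, h1, hpar⟩
        exact ⟨⟨⟨hi, hb⟩, hpar.symm⟩, h1⟩
    omega
  -- identity 5 : F = 2H + so
  set Fs := ∑ i ∈ range N, fb μ i with hFs
  have h5 : Fs = 2 * H + so := by
    have hmod : ∑ i ∈ range N, fb μ i % 2 = so := by
      rw [hso, Finset.card_filter]
      apply Finset.sum_congr rfl
      intro i _
      by_cases h : fb μ i % 2 = 1 <;> simp [h] <;> omega
    calc Fs = ∑ i ∈ range N, (2 * (fb μ i / 2) + fb μ i % 2) := by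
          apply Finset.sum_congr rfl
          intro i _
          omega
      _ = 2 * H + so := by
          rw [Finset.sum_add_distrib, ← Finset.mul_sum, ← hH, hmod]
  -- identity 1 : n + S = F
  set S := ∑ i ∈ range N, i with hS
  have h1 : μ.cells.card + S = Fs := by
    have hrefl : ∑ i ∈ range N, (N - 1 - i) = ∑ i ∈ range N, i :=
      Finset.sum_range_reflect (fun i => i) N
    rw [card_eq_sum μ, hFs, hS, ← hrefl, ← Finset.sum_add_distrib]
    simp only [← hNdef]
    apply Finset.sum_congr rfl
    intro i _
    rfl
  -- identity 2 : 2S = N(N-1)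
  have h2 : 2 * S = N * (N - 1) := by
    rw [hS, mul_comm]
    exact Finset.sum_range_id_mul_two N
  -- final arithmetic over ℤ
  refine ⟨(se : ℤ) - so, ?_⟩
  have h1z : (μ.cells.card : ℤ) + S = Fs := by exact_mod_cast h1
  have h2z : 2 * (S : ℤ) = ((se : ℤ) + so) * (((se : ℤ) + so) - 1) := by
    have h6z : ((N : ℤ)) = (se : ℤ) + so := by exact_mod_cast h6.symm
    rw [← h6z]
    rcases Nat.eq_zero_or_pos N with h | h
    · have hS0 : S = 0 := by rw [hS, h]; simp
      rw [hS0, h]; simp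
    · have hcast : ((N * (N - 1) : ℕ) : ℤ) = (N : ℤ) * ((N : ℤ) - 1) := by
        push_cast [Nat.cast_sub (by omega : 1 ≤ N)]
        ring
      rw [← hcast]
      exact_mod_cast h2
  have h3z : (hookCount 2 μ : ℤ) + T = H := by exact_mod_cast h3
  have h4z : 2 * (T : ℤ) + ((se : ℤ) + so) = (se : ℤ) ^ 2 + so ^ 2 := by
    have h6z : ((N : ℤ)) = (se : ℤ) + so := by exact_mod_cast h6.symm
    rw [← h6z]
    exact_mod_cast h4
  have h5z : (Fs : ℤ) = 2 * H + so := by exact_mod_cast h5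
  linear_combination 8 * h1z - 4 * h2z - 16 * h3z + 8 * h4z + 8 * h5z

end TwoHookAux

open TwoHookAux in
lemma toYoung_card {n : ℕ} (p : n.Partition) : p.toYoung.cells.card = n := by
  classical
  set w := p.parts.sort (· ≥ ·) with hw
  have hpos : ∀ x ∈ w, 0 < x := by
    intro x hx
    exact p.parts_pos (by rwa [hw, Multiset.mem_sort] at hx)
  have hN : Nr p.toYoung = w.length := by
    have := YoungDiagram.rowLens_length_ofRowLens
      (w := w) (hw := List.Pairwise.sortedGE (p.parts.pairwise_sort _)) hpos
    rw [YoungDiagram.length_rowLens] at this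
    exact this
  rw [card_eq_sum, hN]
  have hsum : ∑ i ∈ Finset.range w.length, p.toYoung.rowLen i = w.sum := by
    have hof : w.sum = ∑ i : Fin w.length, w[(i : ℕ)] := by
      conv_lhs => rw [← List.ofFn_getElem (xs := w)]
      rw [List.sum_ofFn]
    rw [hof, ← Fin.sum_univ_eq_sum_range (fun i => p.toYoung.rowLen i) w.length]
    apply Finset.sum_congr rfl
    intro i _
    exact YoungDiagram.rowLen_ofRowLens (w := w) (hw := List.Pairwise.sortedGE (p.parts.pairwise_sort _)) i
  rw [hsum]
  have : (w : Multiset ℕ).sum = p.parts.sum := by rw [hw, Multiset.sort_eq]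
  simpa using this.trans p.parts_sum

theorem vanishing_two_hooks (ℓ : ℕ) [Fact ℓ.Prime] (hodd : ℓ ≠ 2)
    (a₁ a₂ : ℕ) (h₁ : a₁ < ℓ) (h₂ : a₂ < ℓ)
    (hleg : legendreSym ℓ (-16 * a₁ + 8 * a₂ + 1) = -1) (n : ℕ) :
    hookP 2 a₁ ℓ (ℓ * n + a₂) = 0 := by
  unfold hookP
  rw [Fintype.card_eq_zero_iff]
  constructor
  rintro ⟨p, hp⟩
  obtain ⟨d, hd⟩ := TwoHookAux.key p.toYoung
  rw [toYoung_card p] at hd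
  have hE : ((hookCount 2 p.toYoung : ℕ) : ZMod ℓ) = (a₁ : ZMod ℓ) :=
    (ZMod.natCast_eq_natCast_iff _ _ _).mpr hp
  have hns := (legendreSym.eq_neg_one_iff ℓ).mp hleg
  apply hns
  refine ⟨((2 * d - 1 : ℤ) : ZMod ℓ), ?_⟩
  have hz : ((8 * ((ℓ * n + a₂ : ℕ) : ℤ) + 1 : ℤ) : ZMod ℓ)
      = ((16 * (hookCount 2 p.toYoung : ℤ) + (2 * d - 1) ^ 2 : ℤ) : ZMod ℓ) := by
    exact_mod_cast congrArg (fun z : ℤ => ((z : ZMod ℓ))) hd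
  push_cast at hz
  rw [ZMod.natCast_self] at hz
  push_cast
  rw [hE] at hz
  linear_combination hz
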